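/- Let G be an edge-weighted graph, C a pending cycle in G with u ∈ C the (only possible) vertex of degree at least 3 in G. Let G' be obtained by removing all of C except u and adding a fresh vertex z with edge uz of weight ω(C) - ω(C - u), where ω(C) and ω(C - u) denote maximum matching weights of the cycle C and the path C - u, respectively. Then ω(G') = ω(G) - ω(C - u). -/

import Mathlib

set_option linter.unusedSectionVars false
set_option maxHeartbeats 1000000

/-- A matching in a simple graph `G`, given as a finite set of edges of `G`
that are pairwise vertex-disjoint. -/
def IsMatching {V : Type*} (G : SimpleGraph V) (M : Finset (Sym2 V)) : Prop :=
  (∀ e ∈ M, e ∈ G.edgeSet) ∧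
    ∀ e ∈ M, ∀ f ∈ M, e ≠ f → ∀ v, v ∈ e → v ∉ f

/-- The maximum weight of a matching in `G` with edge weights `w`. -/
noncomputable def wmax {V : Type*} (G : SimpleGraph V) (w : Sym2 V → ℕ) : ℕ :=
  sSup {n | ∃ M : Finset (Sym2 V), IsMatching G M ∧ ∑ e ∈ M, w e = n}

/-- The graph obtained from `G` by deleting the vertices in `S`. -/
def deleteVerts {V : Type*} (G : SimpleGraph V) (S : Set V) : SimpleGraph V where
  Adj a b := G.Adj a b ∧ a ∉ S ∧ b ∉ S
  symm := ⟨fun _ _ ⟨h, ha, hb⟩ => ⟨h.symm, hb, ha⟩⟩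
  loopless := ⟨fun a ⟨h, _, _⟩ => G.loopless.irrefl a h⟩

/-- The cycle graph on the vertices `c 0, c 1, …, c (n-1)` (taken cyclically). -/
def cycleOn {V : Type*} (n : ℕ) (c : ℕ → V) : SimpleGraph V :=
  SimpleGraph.fromEdgeSet {e | ∃ i < n, e = s(c i, c ((i + 1) % n))}

/-- The graph obtained from `G` by removing all vertices of the cycle
`c 0, …, c (n-1)` except `u = c 0`, and adding a fresh vertex `z` (`none`)
joined to `u` by an edge. -/
def cycleReduced {V : Type*} (G : SimpleGraph V) (n : ℕ) (c : ℕ → V) (u : V) :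
    SimpleGraph (Option V) where
  Adj a b :=
    match a, b with
    | some a, some b =>
        G.Adj a b ∧ (∀ i < n, c i = a → a = u) ∧ (∀ i < n, c i = b → b = u)
    | some a, none => a = u
    | none, some b => b = u
    | none, none => False
  symm := by
    constructor
    rintro (_ | a) (_ | b) h
    · exact h.elim
    · exact h
    · exact h
    · obtain ⟨h1, h2, h3⟩ := h
      exact ⟨h1.symm, h3, h2⟩
  loopless := by
    constructor
    rintro (_ | a) h
    · exact h.elim
    · exact G.loopless.irrefl a h.1

section wmaxAPI
variable {V : Type*} [Fintype V] [DecidableEq V] {G : SimpleGraph V} {w : Sym2 V → ℕ}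

lemma isMatching_empty (G : SimpleGraph V) : IsMatching G (∅ : Finset (Sym2 V)) := by
  constructor <;> simp

lemma wmax_set_nonempty (G : SimpleGraph V) (w : Sym2 V → ℕ) :
    {n | ∃ M : Finset (Sym2 V), IsMatching G M ∧ ∑ e ∈ M, w e = n}.Nonempty :=
  ⟨0, ∅, isMatching_empty G, by simp⟩

lemma wmax_set_bddAbove (G : SimpleGraph V) (w : Sym2 V → ℕ) :
    BddAbove {n | ∃ M : Finset (Sym2 V), IsMatching G M ∧ ∑ e ∈ M, w e = n} := by
  refine ⟨∑ e ∈ (Finset.univ : Finset (Sym2 V)), w e, ?_⟩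
  rintro x ⟨M, _, rfl⟩
  exact Finset.sum_le_sum_of_subset (Finset.subset_univ M)

lemma le_wmax {M : Finset (Sym2 V)} (h : IsMatching G M) :
    ∑ e ∈ M, w e ≤ wmax G w :=
  le_csSup (wmax_set_bddAbove G w) ⟨M, h, rfl⟩

lemma wmax_le {b : ℕ} (h : ∀ M : Finset (Sym2 V), IsMatching G M → ∑ e ∈ M, w e ≤ b) :
    wmax G w ≤ b :=
  csSup_le (wmax_set_nonempty G w) (by rintro x ⟨M, hM, rfl⟩; exact h M hM)

lemma exists_wmax (G : SimpleGraph V) (w : Sym2 V → ℕ) :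
    ∃ M : Finset (Sym2 V), IsMatching G M ∧ ∑ e ∈ M, w e = wmax G w :=
  Nat.sSup_mem (wmax_set_nonempty G w) (wmax_set_bddAbove G w)

lemma wmax_mono {H : SimpleGraph V} (hHG : ∀ a b, H.Adj a b → G.Adj a b)
    (w : Sym2 V → ℕ) : wmax H w ≤ wmax G w := by
  refine wmax_le fun M hM => le_wmax ⟨fun e he => ?_, hM.2⟩
  have := hM.1 e he
  induction e with
  | h a b => exact hHG a b this

end wmaxAPI

section cyc
variable {V : Type*} [Fintype V] [DecidableEq V] (G : SimpleGraph V)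
    [DecidableRel G.Adj] (n : ℕ) (c : ℕ → V)

lemma mem_cycleOn_edgeSet {e : Sym2 V} :
    e ∈ (cycleOn n c).edgeSet ↔ (∃ i < n, e = s(c i, c ((i + 1) % n))) ∧ ¬e.IsDiag := by
  rw [cycleOn, SimpleGraph.edgeSet_fromEdgeSet]; rfl

lemma cycleOn_sub (hsub : ∀ i < n, G.Adj (c i) (c ((i + 1) % n)))
    {e : Sym2 V} (he : e ∈ (cycleOn n c).edgeSet) : e ∈ G.edgeSet := by
  obtain ⟨⟨i, hi, rfl⟩, _⟩ := (mem_cycleOn_edgeSet n c).1 he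
  exact hsub i hi

lemma cycleOn_vert {e : Sym2 V} (he : e ∈ (cycleOn n c).edgeSet) {v : V} (hv : v ∈ e) :
    ∃ i < n, c i = v := by
  obtain ⟨⟨i, hi, rfl⟩, _⟩ := (mem_cycleOn_edgeSet n c).1 he
  rcases Sym2.mem_iff.1 hv with h | h
  · exact ⟨i, hi, h.symm⟩
  · exact ⟨(i + 1) % n, Nat.mod_lt _ (by omega), h.symm⟩

lemma internal_edge (hn : 3 ≤ n)
    (hinj : ∀ i < n, ∀ j < n, c i = c j → i = j)
    (hsub : ∀ i < n, G.Adj (c i) (c ((i + 1) % n)))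
    (hdeg2 : ∀ i, 0 < i → i < n → G.degree (c i) = 2)
    {e : Sym2 V} (he : e ∈ G.edgeSet) {i : ℕ} (hi0 : 0 < i) (hin : i < n)
    (hie : c i ∈ e) : e ∈ (cycleOn n c).edgeSet := by
  set e1 : Sym2 V := s(c (i - 1), c i) with he1
  set e2 : Sym2 V := s(c i, c ((i + 1) % n)) with he2
  have hadj1 : G.Adj (c (i - 1)) (c i) := by
    have := hsub (i - 1) (by omega)
    have h : (i - 1 + 1) % n = i := by
      have : i - 1 + 1 = i := by omega
      rw [this, Nat.mod_eq_of_lt hin]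
    rwa [h] at this
  have hadj2 : G.Adj (c i) (c ((i + 1) % n)) := hsub i hin
  have hne12 : e1 ≠ e2 := by
    intro h
    rw [he1, he2, Sym2.eq_iff] at h
    rcases h with ⟨h1, h2⟩ | ⟨h1, h2⟩
    · exact absurd (hinj _ (by omega) _ hin h1) (by omega)
    · have hlt : (i + 1) % n < n := Nat.mod_lt _ (by omega)
      have hij := hinj _ (by omega) _ hlt h1
      rcases Nat.lt_or_ge (i + 1) n with h | h
      · rw [Nat.mod_eq_of_lt h] at hij; omega
      · have hh : i + 1 = n := by omega
        rw [hh, Nat.mod_self] at hij; omega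
  have hsubset : ({e1, e2} : Finset (Sym2 V)) ⊆ G.incidenceFinset (c i) := by
    intro f hf
    rw [SimpleGraph.mem_incidenceFinset]
    rcases Finset.mem_insert.1 hf with rfl | hf
    · exact ⟨hadj1, Sym2.mem_mk_right _ _⟩
    · rw [Finset.mem_singleton] at hf; subst hf
      exact ⟨hadj2, Sym2.mem_mk_left _ _⟩
  have hcard : (G.incidenceFinset (c i)).card ≤ ({e1, e2} : Finset (Sym2 V)).card := by
    rw [SimpleGraph.card_incidenceFinset_eq_degree, hdeg2 i hi0 hin,
      Finset.card_insert_of_notMem (by simpa using hne12), Finset.card_singleton]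
  have heq := Finset.eq_of_subset_of_card_le hsubset hcard
  have hemem : e ∈ ({e1, e2} : Finset (Sym2 V)) := by
    rw [heq, SimpleGraph.mem_incidenceFinset]
    exact ⟨he, hie⟩
  rw [mem_cycleOn_edgeSet]
  rcases Finset.mem_insert.1 hemem with rfl | hf
  · constructor
    · refine ⟨i - 1, by omega, ?_⟩
      have h : (i - 1 + 1) % n = i := by
        have : i - 1 + 1 = i := by omega
        rw [this, Nat.mod_eq_of_lt hin]
      rw [h]
    · rw [Sym2.mk_isDiag_iff]
      intro h
      exact absurd (hinj _ (by omega) _ hin h) (by omega)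
  · rw [Finset.mem_singleton] at hf; subst hf
    constructor
    · exact ⟨i, hin, rfl⟩
    · rw [Sym2.mk_isDiag_iff]
      intro h
      have hlt : (i + 1) % n < n := Nat.mod_lt _ (by omega)
      have hij := hinj _ hin _ hlt h
      rcases Nat.lt_or_ge (i + 1) n with hc | hc
      · rw [Nat.mod_eq_of_lt hc] at hij; omega
      · have hh : i + 1 = n := by omega
        rw [hh, Nat.mod_self] at hij; omega
end cyc

section opt
variable {V : Type*} [DecidableEq V]

lemma map_some_getD (u : V) (e : Sym2 V) :
    Sym2.map (fun o => Option.getD o u) (Sym2.map some e) = e := by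
  rw [Sym2.map_map]
  have : ((fun o => Option.getD o u) ∘ some) = id := by funext a; rfl
  rw [this, Sym2.map_id, id]

lemma none_not_mem_map_some (e : Sym2 V) : (none : Option V) ∉ Sym2.map some e := by
  rw [Sym2.mem_map]
  rintro ⟨a, _, h⟩
  exact Option.some_ne_none a h

lemma exists_some_pair {e : Sym2 (Option V)} (h : (none : Option V) ∉ e) :
    ∃ a b : V, e = s(some a, some b) := by
  induction e with
  | h x y =>
    match x, y with
    | some a, some b => exact ⟨a, b, rfl⟩
    | none, _ => exact absurd (Sym2.mem_mk_left _ _) h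
    | _, none => exact absurd (Sym2.mem_mk_right _ _) h

lemma getD_injOn (u : V) {e f : Sym2 (Option V)} (he : (none : Option V) ∉ e)
    (hf : (none : Option V) ∉ f)
    (h : Sym2.map (fun o => Option.getD o u) e = Sym2.map (fun o => Option.getD o u) f) :
    e = f := by
  obtain ⟨a, b, rfl⟩ := exists_some_pair he
  obtain ⟨a', b', rfl⟩ := exists_some_pair hf
  simp only [Sym2.map_pair_eq, Option.getD_some, Sym2.eq_iff] at h ⊢
  rcases h with ⟨rfl, rfl⟩ | ⟨rfl, rfl⟩
  · left; exact ⟨rfl, rfl⟩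
  · right; exact ⟨rfl, rfl⟩

lemma mem_deleteVerts_edgeSet {H : SimpleGraph V} {S : Set V} {e : Sym2 V} :
    e ∈ (deleteVerts H S).edgeSet ↔ e ∈ H.edgeSet ∧ ∀ v ∈ e, v ∉ S := by
  induction e with
  | h x y =>
    simp only [SimpleGraph.mem_edgeSet, Sym2.mem_iff]
    constructor
    · rintro ⟨h1, h2, h3⟩
      exact ⟨h1, by rintro v (rfl | rfl) <;> assumption⟩
    · rintro ⟨h1, h2⟩
      exact ⟨h1, h2 x (Or.inl rfl), h2 y (Or.inr rfl)⟩

lemma cr_adj_some {G : SimpleGraph V} {n : ℕ} {c : ℕ → V} {u : V} {a b : V} :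
    (cycleReduced G n c u).Adj (some a) (some b) ↔
      G.Adj a b ∧ (∀ i < n, c i = a → a = u) ∧ (∀ i < n, c i = b → b = u) := Iff.rfl

lemma cr_none_edge {G : SimpleGraph V} {n : ℕ} {c : ℕ → V} {u : V} {e : Sym2 (Option V)}
    (he : e ∈ (cycleReduced G n c u).edgeSet) (h : (none : Option V) ∈ e) :
    e = s(some u, none) := by
  induction e with
  | h x y =>
    rw [SimpleGraph.mem_edgeSet] at he
    rcases Sym2.mem_iff.1 h with rfl | rfl
    · match y, he with
      | some b, hb => rw [show b = u from hb]; exact Sym2.eq_swap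
    · match x, he with
      | some a, ha => rw [show a = u from ha]

lemma uz_mem_cr (G : SimpleGraph V) (n : ℕ) (c : ℕ → V) (u : V) :
    s(some u, (none : Option V)) ∈ (cycleReduced G n c u).edgeSet := by
  rw [SimpleGraph.mem_edgeSet]; rfl

lemma map_some_mem_cr {G : SimpleGraph V} {n : ℕ} {c : ℕ → V} {u : V} {e : Sym2 V}
    (he : e ∈ G.edgeSet) (hv : ∀ a ∈ e, ∀ i < n, c i = a → a = u) :
    Sym2.map some e ∈ (cycleReduced G n c u).edgeSet := by
  induction e with
  | h a b =>
    rw [Sym2.map_pair_eq, SimpleGraph.mem_edgeSet, cr_adj_some]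
    rw [SimpleGraph.mem_edgeSet] at he
    exact ⟨he, fun i hi hc => hv a (Sym2.mem_mk_left _ _) i hi hc,
      fun i hi hc => hv b (Sym2.mem_mk_right _ _) i hi hc⟩

end opt

lemma sym2_exists_mem {α : Type*} (e : Sym2 α) : ∃ v, v ∈ e :=
  ⟨e.out.1, Sym2.out_fst_mem e⟩

section main
variable {V : Type*} [Fintype V] [DecidableEq V]

lemma ineqB (G : SimpleGraph V) [DecidableRel G.Adj] (w : Sym2 V → ℕ)
    (n : ℕ) (hn : 3 ≤ n) (c : ℕ → V) (u : V) (hu : c 0 = u)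
    (hinj : ∀ i < n, ∀ j < n, c i = c j → i = j)
    (hsub : ∀ i < n, G.Adj (c i) (c ((i + 1) % n)))
    (hdeg2 : ∀ i, 0 < i → i < n → G.degree (c i) = 2) :
    wmax G w ≤
      wmax (cycleReduced G n c u)
        (fun e =>
          if (none : Option V) ∈ e then
            wmax (cycleOn n c) w - wmax (deleteVerts (cycleOn n c) {u}) w
          else w (e.map fun o => o.getD u)) +
      wmax (deleteVerts (cycleOn n c) {u}) w := by
  classical
  set w' : Sym2 (Option V) → ℕ := fun e =>
    if (none : Option V) ∈ e then
      wmax (cycleOn n c) w - wmax (deleteVerts (cycleOn n c) {u}) w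
    else w (e.map fun o => o.getD u) with hw'
  set ωC := wmax (cycleOn n c) w with hωC
  set ωP := wmax (deleteVerts (cycleOn n c) {u}) w with hωP
  have hωPC : ωP ≤ ωC := wmax_mono (H := deleteVerts (cycleOn n c) {u}) (G := cycleOn n c) (fun a b h => h.1) w
  refine wmax_le fun M hM => ?_
  set p : Sym2 V → Prop := fun e => ∃ i ∈ Finset.Ioo 0 n, c i ∈ e with hp
  set Mout := M.filter (fun e => ¬ p e) with hMout
  set Mcyc := M.filter p with hMcyc
  have hsplit : ∑ e ∈ Mcyc, w e + ∑ e ∈ Mout, w e = ∑ e ∈ M, w e :=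
    Finset.sum_filter_add_sum_filter_not M p w
  have hMoutM : Mout ⊆ M := Finset.filter_subset _ _
  have hMcycM : Mcyc ⊆ M := Finset.filter_subset _ _
  have hcycEdge : ∀ e ∈ Mcyc, e ∈ (cycleOn n c).edgeSet := by
    intro e he
    rw [hMcyc, Finset.mem_filter] at he
    obtain ⟨heM, i, hi, hie⟩ := he
    rw [Finset.mem_Ioo] at hi
    exact internal_edge G n c hn hinj hsub hdeg2 (hM.1 e heM) hi.1 hi.2 hie
  have hMcycMatch : IsMatching (cycleOn n c) Mcyc :=
    ⟨hcycEdge, fun e he f hf => hM.2 e (hMcycM he) f (hMcycM hf)⟩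
  have hsumCyc : ∑ e ∈ Mcyc, w e ≤ ωC := le_wmax hMcycMatch
  have houtvert : ∀ e ∈ Mout, ∀ a ∈ e, ∀ i < n, c i = a → a = u := by
    intro e he a ha i hi hca
    rcases Nat.eq_zero_or_pos i with rfl | hi0
    · rw [← hca, hu]
    · exfalso
      rw [hMout, Finset.mem_filter] at he
      exact he.2 ⟨i, Finset.mem_Ioo.2 ⟨hi0, hi⟩, by rw [hca]; exact ha⟩
  set Msome := Mout.image (Sym2.map some) with hMsome
  have hsomeInj : Function.Injective (Sym2.map (some : V → Option V)) :=
    Sym2.map.injective (Option.some_injective V)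
  have hMsomeMatch : IsMatching (cycleReduced G n c u) Msome := by
    constructor
    · intro e' he'
      rw [hMsome, Finset.mem_image] at he'
      obtain ⟨e, he, rfl⟩ := he'
      exact map_some_mem_cr (hM.1 e (hMoutM he)) (houtvert e he)
    · intro e' he' f' hf' hne v hv hv'
      rw [hMsome, Finset.mem_image] at he' hf'
      obtain ⟨e, he, rfl⟩ := he'
      obtain ⟨f, hf, rfl⟩ := hf'
      obtain ⟨x, hx, hxv⟩ := Sym2.mem_map.1 hv
      obtain ⟨y, hy, hyv⟩ := Sym2.mem_map.1 hv'
      have hxy : x = y := Option.some_injective V (by rw [hxv, hyv])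
      subst hxy
      exact hM.2 e (hMoutM he) f (hMoutM hf) (fun h => hne (by rw [h])) x hx hy
  have hsumMsome : ∑ e' ∈ Msome, w' e' = ∑ e ∈ Mout, w e := by
    rw [hMsome, Finset.sum_image (fun e _ f _ h => hsomeInj h)]
    refine Finset.sum_congr rfl fun e he => ?_
    rw [hw']
    simp only [if_neg (none_not_mem_map_some e)]
    rw [map_some_getD]
  by_cases hcase : ∃ e0 ∈ Mout, u ∈ e0
  · obtain ⟨e0, he0, hue0⟩ := hcase
    have hMcycNoU : ∀ e ∈ Mcyc, u ∉ e := by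
      intro e he hue
      have hne : e0 ≠ e := by
        intro h; subst h
        rw [hMout, Finset.mem_filter] at he0
        rw [hMcyc, Finset.mem_filter] at he
        exact he0.2 he.2
      exact hM.2 e0 (hMoutM he0) e (hMcycM he) hne u hue0 hue
    have hMcycDel : IsMatching (deleteVerts (cycleOn n c) {u}) Mcyc := by
      refine ⟨fun e he => ?_, hMcycMatch.2⟩
      rw [mem_deleteVerts_edgeSet]
      refine ⟨hcycEdge e he, fun v hv hvS => ?_⟩
      rw [Set.mem_singleton_iff] at hvS
      subst hvS
      exact hMcycNoU e he hv
    have h1 : ∑ e ∈ Mcyc, w e ≤ ωP := le_wmax hMcycDel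
    have h2 : ∑ e' ∈ Msome, w' e' ≤ wmax (cycleReduced G n c u) w' := le_wmax hMsomeMatch
    omega
  · push_neg at hcase
    set M' := insert (s(some u, (none : Option V))) Msome with hM'
    have hnotmem : s(some u, (none : Option V)) ∉ Msome := by
      intro h
      rw [hMsome, Finset.mem_image] at h
      obtain ⟨e, _, heq⟩ := h
      exact none_not_mem_map_some e (by rw [heq]; exact Sym2.mem_mk_right _ _)
    have hdisj : ∀ f ∈ Msome, ∀ v, v ∈ s(some u, (none : Option V)) → v ∉ f := by
      intro f hf v hv hvf
      rw [hMsome, Finset.mem_image] at hf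
      obtain ⟨e, heM, rfl⟩ := hf
      rcases Sym2.mem_iff.1 hv with rfl | rfl
      · obtain ⟨x, hx, hxv⟩ := Sym2.mem_map.1 hvf
        have : x = u := Option.some_injective V hxv
        subst this
        exact hcase e heM hx
      · exact none_not_mem_map_some e hvf
    have hM'Match : IsMatching (cycleReduced G n c u) M' := by
      constructor
      · intro e he
        rcases Finset.mem_insert.1 he with rfl | he
        · exact uz_mem_cr G n c u
        · exact hMsomeMatch.1 e he
      · intro e he f hf hne v hv hv'
        rcases Finset.mem_insert.1 he with rfl | he <;>
          rcases Finset.mem_insert.1 hf with rfl | hf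
        · exact hne rfl
        · exact hdisj f hf v hv hv'
        · exact hdisj e he v hv' hv
        · exact hMsomeMatch.2 e he f hf hne v hv hv'
    have huz : w' s(some u, (none : Option V)) = ωC - ωP := by
      rw [hw']; simp
    have hsum' : ∑ e ∈ M', w' e = (ωC - ωP) + ∑ e ∈ Mout, w e := by
      rw [hM', Finset.sum_insert hnotmem, hsumMsome, huz]
    have h2 : ∑ e ∈ M', w' e ≤ wmax (cycleReduced G n c u) w' := le_wmax hM'Match
    omega

lemma ineqA (G : SimpleGraph V) [DecidableRel G.Adj] (w : Sym2 V → ℕ)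
    (n : ℕ) (hn : 3 ≤ n) (c : ℕ → V) (u : V) (hu : c 0 = u)
    (hinj : ∀ i < n, ∀ j < n, c i = c j → i = j)
    (hsub : ∀ i < n, G.Adj (c i) (c ((i + 1) % n)))
    (hdeg2 : ∀ i, 0 < i → i < n → G.degree (c i) = 2) :
    wmax (cycleReduced G n c u)
        (fun e =>
          if (none : Option V) ∈ e then
            wmax (cycleOn n c) w - wmax (deleteVerts (cycleOn n c) {u}) w
          else w (e.map fun o => o.getD u)) +
      wmax (deleteVerts (cycleOn n c) {u}) w ≤ wmax G w := by
  classical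
  set w' : Sym2 (Option V) → ℕ := fun e =>
    if (none : Option V) ∈ e then
      wmax (cycleOn n c) w - wmax (deleteVerts (cycleOn n c) {u}) w
    else w (e.map fun o => o.getD u) with hw'
  set ωC := wmax (cycleOn n c) w with hωC
  set ωP := wmax (deleteVerts (cycleOn n c) {u}) w with hωP
  have hωPC : ωP ≤ ωC := wmax_mono (H := deleteVerts (cycleOn n c) {u}) (G := cycleOn n c) (fun a b h => h.1) w
  obtain ⟨M', hM', hsumM'⟩ := exists_wmax (cycleReduced G n c u) w'
  rw [← hsumM']
  set M₀ := M'.filter (fun e => (none : Option V) ∉ e) with hM₀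
  have hM₀sub : M₀ ⊆ M' := Finset.filter_subset _ _
  have hnone : ∀ e ∈ M₀, (none : Option V) ∉ e := fun e he => (Finset.mem_filter.1 he).2
  set Mback := M₀.image (Sym2.map (fun o => Option.getD o u)) with hMback
  have hInjOn : ∀ e ∈ M₀, ∀ f ∈ M₀,
      Sym2.map (fun o => Option.getD o u) e = Sym2.map (fun o => Option.getD o u) f →
        e = f := fun e he f hf h => getD_injOn u (hnone e he) (hnone f hf) h
  have hsumback : ∑ e ∈ Mback, w e = ∑ e ∈ M₀, w' e := by
    rw [hMback, Finset.sum_image hInjOn]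
    refine Finset.sum_congr rfl fun e he => ?_
    rw [hw']
    simp only [if_neg (hnone e he)]
  have hbackprop : ∀ e ∈ M₀, (Sym2.map (fun o => Option.getD o u) e) ∈ G.edgeSet ∧
      ∀ v ∈ Sym2.map (fun o => Option.getD o u) e, ∀ i < n, c i = v → v = u := by
    intro e he
    obtain ⟨a, b, rfl⟩ := exists_some_pair (hnone e he)
    have hadj := hM'.1 _ (hM₀sub he)
    rw [SimpleGraph.mem_edgeSet, cr_adj_some] at hadj
    rw [Sym2.map_pair_eq]
    simp only [Option.getD_some]
    refine ⟨hadj.1, fun v hv i hi hc => ?_⟩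
    rcases Sym2.mem_iff.1 hv with rfl | rfl
    · exact hadj.2.1 i hi hc
    · exact hadj.2.2 i hi hc
  have hsome_mem : ∀ e ∈ M₀, ∀ v, v ∈ Sym2.map (fun o => Option.getD o u) e →
      some v ∈ e := by
    intro e he v hv
    obtain ⟨x, hx, hxv⟩ := Sym2.mem_map.1 hv
    cases x with
    | none => exact absurd hx (hnone e he)
    | some a =>
      rw [Option.getD_some] at hxv
      rw [← hxv]; exact hx
  have hMbackMatch : IsMatching G Mback := by
    constructor
    · intro e' he'
      rw [hMback, Finset.mem_image] at he'
      obtain ⟨e, he, rfl⟩ := he'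
      exact (hbackprop e he).1
    · intro e' he' f' hf' hne v hv hv'
      rw [hMback, Finset.mem_image] at he' hf'
      obtain ⟨e, he, rfl⟩ := he'
      obtain ⟨f, hf, rfl⟩ := hf'
      exact hM'.2 e (hM₀sub he) f (hM₀sub hf) (fun h => hne (by rw [h])) (some v)
        (hsome_mem e he v hv) (hsome_mem f hf v hv')
  by_cases hz : s(some u, (none : Option V)) ∈ M'
  · -- the edge uz is used; combine with an optimal matching of the whole cycle
    obtain ⟨Copt, hCopt, hCsum⟩ := exists_wmax (cycleOn n c) w
    have hfilt : M'.filter (fun e => (none : Option V) ∈ e) =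
        {s(some u, (none : Option V))} := by
      apply Finset.eq_singleton_iff_unique_mem.2
      constructor
      · rw [Finset.mem_filter]; exact ⟨hz, Sym2.mem_mk_right _ _⟩
      · intro e he
        rw [Finset.mem_filter] at he
        exact cr_none_edge (hM'.1 e he.1) he.2
    have huz : w' s(some u, (none : Option V)) = ωC - ωP := by
      rw [hw']; simp
    have hsplit : ∑ e ∈ M', w' e = (ωC - ωP) + ∑ e ∈ M₀, w' e := by
      rw [← Finset.sum_filter_add_sum_filter_not M' (fun e => (none : Option V) ∈ e) w',
        hfilt, Finset.sum_singleton, huz]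
    have hnoU : ∀ e ∈ M₀, (some u : Option V) ∉ e := by
      intro e he hue
      have hne : s(some u, (none : Option V)) ≠ e := by
        intro h
        exact hnone e he (by rw [← h]; exact Sym2.mem_mk_right _ _)
      exact hM'.2 _ hz e (hM₀sub he) hne (some u) (Sym2.mem_mk_left _ _) hue
    have hback_avoid : ∀ e' ∈ Mback, ∀ v ∈ e', ∀ i < n, c i ≠ v := by
      intro e' he' v hv i hi hc
      rw [hMback, Finset.mem_image] at he'
      obtain ⟨e, he, rfl⟩ := he'
      have := (hbackprop e he).2 v hv i hi hc
      subst this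
      exact hnoU e he (hsome_mem e he v hv)
    have hdisjCopt : Disjoint Mback Copt := by
      rw [Finset.disjoint_left]
      intro e heB heC
      obtain ⟨v, hv⟩ := sym2_exists_mem e
      obtain ⟨i, hi, hc⟩ := cycleOn_vert n c (hCopt.1 e heC) hv
      exact hback_avoid e heB v hv i hi hc
    have hMGMatch : IsMatching G (Mback ∪ Copt) := by
      constructor
      · intro e he
        rcases Finset.mem_union.1 he with he | he
        · exact hMbackMatch.1 e he
        · exact cycleOn_sub G n c hsub (hCopt.1 e he)
      · intro e he f hf hne v hv hv'
        rcases Finset.mem_union.1 he with he | he <;>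
          rcases Finset.mem_union.1 hf with hf | hf
        · exact hMbackMatch.2 e he f hf hne v hv hv'
        · obtain ⟨i, hi, hc⟩ := cycleOn_vert n c (hCopt.1 f hf) hv'
          exact hback_avoid e he v hv i hi hc
        · obtain ⟨i, hi, hc⟩ := cycleOn_vert n c (hCopt.1 e he) hv
          exact hback_avoid f hf v hv' i hi hc
        · exact hCopt.2 e he f hf hne v hv hv'
    have hMGsum : ∑ e ∈ Mback ∪ Copt, w e = ∑ e ∈ M₀, w' e + ωC := by
      rw [Finset.sum_union hdisjCopt, hsumback, hCsum]
    have hle : ∑ e ∈ Mback ∪ Copt, w e ≤ wmax G w := le_wmax hMGMatch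
    omega
  · -- the edge uz is not used; combine with an optimal matching of the path C - u
    obtain ⟨Popt, hPopt, hPsum⟩ := exists_wmax (deleteVerts (cycleOn n c) {u}) w
    have hallnone : ∀ e ∈ M', (none : Option V) ∉ e := by
      intro e he hne
      exact hz (cr_none_edge (hM'.1 e he) hne ▸ he)
    have hM₀eq : M₀ = M' := by
      rw [hM₀]
      exact Finset.filter_true_of_mem hallnone
    have hPopt_vert : ∀ e ∈ Popt, ∀ v ∈ e, (∃ i < n, c i = v) ∧ v ≠ u := by
      intro e he v hv
      have := mem_deleteVerts_edgeSet.1 (hPopt.1 e he)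
      exact ⟨cycleOn_vert n c this.1 hv, fun h => this.2 v hv (by rw [h]; rfl)⟩
    have hback_avoid : ∀ e' ∈ Mback, ∀ v ∈ e', ∀ i < n, c i = v → v = u := by
      intro e' he' v hv i hi hc
      rw [hMback, Finset.mem_image] at he'
      obtain ⟨e, he, rfl⟩ := he'
      exact (hbackprop e he).2 v hv i hi hc
    have hdisjPopt : Disjoint Mback Popt := by
      rw [Finset.disjoint_left]
      intro e heB heP
      obtain ⟨v, hv⟩ := sym2_exists_mem e
      obtain ⟨⟨i, hi, hc⟩, hvu⟩ := hPopt_vert e heP v hv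
      exact hvu (hback_avoid e heB v hv i hi hc)
    have hMGMatch : IsMatching G (Mback ∪ Popt) := by
      constructor
      · intro e he
        rcases Finset.mem_union.1 he with he | he
        · exact hMbackMatch.1 e he
        · exact cycleOn_sub G n c hsub (mem_deleteVerts_edgeSet.1 (hPopt.1 e he)).1
      · intro e he f hf hne v hv hv'
        rcases Finset.mem_union.1 he with he | he <;>
          rcases Finset.mem_union.1 hf with hf | hf
        · exact hMbackMatch.2 e he f hf hne v hv hv'
        · obtain ⟨⟨i, hi, hc⟩, hvu⟩ := hPopt_vert f hf v hv'
          exact hvu (hback_avoid e he v hv i hi hc)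
        · obtain ⟨⟨i, hi, hc⟩, hvu⟩ := hPopt_vert e he v hv
          exact hvu (hback_avoid f hf v hv' i hi hc)
        · exact hPopt.2 e he f hf hne v hv hv'
    have hMGsum : ∑ e ∈ Mback ∪ Popt, w e = ∑ e ∈ M₀, w' e + ωP := by
      rw [Finset.sum_union hdisjPopt, hsumback, hPsum]
    have hle : ∑ e ∈ Mback ∪ Popt, w e ≤ wmax G w := le_wmax hMGMatch
    rw [hM₀eq] at hMGsum
    omega

end main

/-- Pending-cycle rule: let `C = c 0 … c (n-1)` be a cycle in `G` whose vertices all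
have degree 2 in `G`, except possibly the vertex `u = c 0`. Let `G'` be obtained by
removing all of `C` except `u` and adding a fresh vertex `z` with edge `uz` of weight
`ω(C) - ω(C - u)` (all other edges keep their weights). Then
`ω(G') = ω(G) - ω(C - u)`. -/
theorem stmt10 {V : Type*} [Fintype V] [DecidableEq V] (G : SimpleGraph V)
    [DecidableRel G.Adj] (w : Sym2 V → ℕ)
    (n : ℕ) (hn : 3 ≤ n) (c : ℕ → V) (u : V) (hu : c 0 = u)
    (hinj : ∀ i < n, ∀ j < n, c i = c j → i = j)
    (hsub : ∀ i < n, G.Adj (c i) (c ((i + 1) % n)))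
    (hdeg2 : ∀ i, 0 < i → i < n → G.degree (c i) = 2) :
    wmax (cycleReduced G n c u)
        (fun e =>
          if (none : Option V) ∈ e then
            wmax (cycleOn n c) w - wmax (deleteVerts (cycleOn n c) {u}) w
          else w (e.map fun o => o.getD u)) =
      wmax G w - wmax (deleteVerts (cycleOn n c) {u}) w := by
  have hA := ineqA G w n hn c u hu hinj hsub hdeg2
  have hB := ineqB G w n hn c u hu hinj hsub hdeg2
  omega
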